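/- Let w be a word of length T in ℝ^d and let v¹,…,v^k be non-overlapping subwords of w with total length |v̲| ≥ 1. Then the Lévy–Prokhorov distance between L[w] and L[v̲] = Σ_i (|v^i|/|v̲|)L[v^i] satisfies d_LP(L[w], L[v̲]) ≤ 2·h(|v̲|/T), where h(x) = |1/x − 1| + |1 − x|. -/

import Mathlib

open MeasureTheory
open scoped ENNReal

/-- The error-control function `h(x) = |1/x − 1| + |1 − x|`. -/
noncomputable def hfun (x : ℝ) : ℝ := |1 / x - 1| + |1 - x|

lemma real_key (M N V T : ℕ) (hV : 1 ≤ V) (hVT : V ≤ T) (hNM : N ≤ M) (hMT : M ≤ T)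
    (hMN : M + V ≤ N + T) :
    (M : ℝ) / T ≤ (N : ℝ) / V + 2 * hfun ((V : ℝ) / T) ∧
      (N : ℝ) / V ≤ (M : ℝ) / T + 2 * hfun ((V : ℝ) / T) := by
  have hVpos : (0 : ℝ) < V := by exact_mod_cast hV
  have hVT' : (V : ℝ) ≤ T := by exact_mod_cast hVT
  have hTpos : (0 : ℝ) < T := lt_of_lt_of_le hVpos hVT'
  have hNM' : (N : ℝ) ≤ M := by exact_mod_cast hNM
  have hMT' : (M : ℝ) ≤ T := by exact_mod_cast hMT
  have hMN' : (M : ℝ) + V ≤ N + T := by exact_mod_cast hMN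
  have hN0 : (0 : ℝ) ≤ N := Nat.cast_nonneg N
  have hM0 : (0 : ℝ) ≤ M := Nat.cast_nonneg M
  have hh : hfun ((V : ℝ) / T) = T / V - V / T := by
    unfold hfun
    rw [one_div, inv_div, abs_of_nonneg, abs_of_nonneg]
    · ring
    · have : (V : ℝ) / T ≤ 1 := by rw [div_le_one hTpos]; exact hVT'
      linarith
    · have : (1 : ℝ) ≤ T / V := by rw [le_div_iff₀ hVpos]; linarith
      linarith
  constructor
  · have h1 : (M : ℝ) / T ≤ ((N : ℝ) * T + 2 * (T * T - V * V)) / (V * T) := by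
      rw [div_le_div_iff₀ hTpos (by positivity)]
      nlinarith [mul_le_mul_of_nonneg_right hMN' hVpos.le,
        mul_le_mul_of_nonneg_left hVT' hN0, mul_self_le_mul_self hVpos.le hVT',
        mul_le_mul_of_nonneg_right hVT' hVpos.le]
    refine h1.trans_eq ?_
    rw [hh]; field_simp
  · have h2 : (N : ℝ) / V ≤ ((M : ℝ) * V + 2 * (T * T - V * V)) / (V * T) := by
      rw [div_le_div_iff₀ hVpos (by positivity)]
      nlinarith [mul_le_mul_of_nonneg_right (mul_le_mul_of_nonneg_right hNM' hTpos.le) hVpos.le,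
        mul_le_mul_of_nonneg_right (mul_le_mul_of_nonneg_right hMT' (sub_nonneg.2 hVT')) hVpos.le,
        mul_le_mul_of_nonneg_right (mul_self_le_mul_self hVpos.le hVT') hVpos.le,
        mul_le_mul_of_nonneg_right (mul_le_mul_of_nonneg_right hVT' hVpos.le) hVpos.le]
    refine h2.trans_eq ?_
    rw [hh]; field_simp

/-- Let `w` be a word of length `T` in `ℝ^d` and `v^1, …, v^k`
non-overlapping subwords of `w` (given by injections with pairwise disjoint ranges) of
total length `|v̲| ≥ 1`. Then
`d_LP(L[w], ∑_i (|v^i|/|v̲|) L[v^i]) ≤ 2 · h(|v̲|/T)` where `h(x) = |1/x − 1| + |1 − x|`. -/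
theorem stmt8 {d T k : ℕ} (hT : 1 ≤ T) (w : Fin T → EuclideanSpace ℝ (Fin d))
    (ℓ : Fin k → ℕ) (ι : (i : Fin k) → Fin (ℓ i) → Fin T)
    (hinj : ∀ i, Function.Injective (ι i))
    (hdisj : ∀ i i', i ≠ i' → ∀ a a', ι i a ≠ ι i' a')
    (hV : 1 ≤ ∑ i, ℓ i) :
    levyProkhorovDist ((T : ℝ≥0∞)⁻¹ • ∑ i, Measure.dirac (w i))
        (∑ i, ((ℓ i : ℝ≥0∞) / ((∑ i', ℓ i' : ℕ) : ℝ≥0∞)) •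
          ((ℓ i : ℝ≥0∞)⁻¹ • ∑ a, Measure.dirac (w (ι i a))))
      ≤ 2 * hfun (((∑ i', ℓ i' : ℕ) : ℝ) / (T : ℝ)) := by
  classical
  set V : ℕ := ∑ i, ℓ i with hVdef
  set e : (Σ i : Fin k, Fin (ℓ i)) → Fin T := fun p => ι p.1 p.2 with he
  have einj : Function.Injective e := by
    rintro ⟨i, a⟩ ⟨j, b⟩ hpq
    rcases eq_or_ne i j with rfl | hne
    · exact congrArg (Sigma.mk i) (hinj i hpq)
    · exact absurd hpq (hdisj i j hne a b)
  have cardS : Fintype.card (Σ i : Fin k, Fin (ℓ i)) = V := by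
    simp [Fintype.card_sigma, hVdef]
  have hVT : V ≤ T := by
    have := Fintype.card_le_of_injective e einj
    simpa [cardS] using this
  have hTpos : (0 : ℝ) < T := by exact_mod_cast hT
  have hVpos : (0 : ℝ) < V := by exact_mod_cast hV
  have hVne : (V : ℝ≥0∞) ≠ 0 := Nat.cast_ne_zero.mpr (by omega)
  have hVnetop : (V : ℝ≥0∞) ≠ ⊤ := ENNReal.natCast_ne_top V
  -- simplify the second measure
  have hν : (∑ i, ((ℓ i : ℝ≥0∞) / ((∑ i', ℓ i' : ℕ) : ℝ≥0∞)) •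
        ((ℓ i : ℝ≥0∞)⁻¹ • ∑ a, Measure.dirac (w (ι i a))))
      = (V : ℝ≥0∞)⁻¹ • ∑ p : Σ i : Fin k, Fin (ℓ i), Measure.dirac (w (e p)) := by
    rw [← Finset.univ_sigma_univ, Finset.sum_sigma, Finset.smul_sum]
    refine Finset.sum_congr rfl fun i _ => ?_
    by_cases hi : ℓ i = 0
    · have : IsEmpty (Fin (ℓ i)) := by rw [hi]; infer_instance
      simp
    · rw [smul_smul]
      congr 1
      rw [ENNReal.div_eq_inv_mul, mul_assoc,
        ENNReal.mul_inv_cancel (by exact_mod_cast hi) (ENNReal.natCast_ne_top _), mul_one]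
  rw [hν]
  set μ := (T : ℝ≥0∞)⁻¹ • ∑ i, Measure.dirac (w i) with hμ
  set ν := (V : ℝ≥0∞)⁻¹ • ∑ p : Σ i : Fin k, Fin (ℓ i), Measure.dirac (w (e p)) with hνdef
  have hfun_nonneg : 0 ≤ 2 * hfun ((V : ℝ) / T) := by
    have : 0 ≤ hfun ((V : ℝ) / T) := by unfold hfun; positivity
    linarith
  have hedist : levyProkhorovEDist μ ν ≤ ENNReal.ofReal (2 * hfun ((V : ℝ) / T)) := by
    apply levyProkhorovEDist_le_of_forall
    intro ε B hδε hεtop hB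
    set M : ℕ := (Finset.univ.filter fun t : Fin T => w t ∈ B).card with hM
    set N : ℕ := (Finset.univ.filter fun p : Σ i : Fin k, Fin (ℓ i) => w (e p) ∈ B).card with hN
    -- compute the measures on B
    have hμB : μ B = ENNReal.ofReal ((M : ℝ) / T) := by
      rw [hμ, Measure.smul_apply, Measure.finset_sum_apply]
      simp_rw [Measure.dirac_apply' _ hB, Set.indicator_apply, Pi.one_apply]
      rw [Finset.sum_boole, smul_eq_mul, ← ENNReal.div_eq_inv_mul,
        ENNReal.ofReal_div_of_pos hTpos, ENNReal.ofReal_natCast, ENNReal.ofReal_natCast]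
    have hνB : ν B = ENNReal.ofReal ((N : ℝ) / V) := by
      rw [hνdef, Measure.smul_apply, Measure.finset_sum_apply]
      simp_rw [Measure.dirac_apply' _ hB, Set.indicator_apply, Pi.one_apply]
      rw [Finset.sum_boole, smul_eq_mul, ← ENNReal.div_eq_inv_mul,
        ENNReal.ofReal_div_of_pos hVpos, ENNReal.ofReal_natCast, ENNReal.ofReal_natCast]
    -- counting facts
    have hNM : N ≤ M := by
      apply Finset.card_le_card_of_injOn e
      · intro p hp
        simp only [Finset.mem_coe, Finset.mem_filter, Finset.mem_univ, true_and] at hp ⊢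
        exact hp
      · exact einj.injOn
    have hMT : M ≤ T := by
      simpa using Finset.card_filter_le Finset.univ (fun t : Fin T => w t ∈ B)
    have hMN : M + V ≤ N + T := by
      set R : Finset (Fin T) := Finset.univ.image e with hR
      have hcardR : R.card = V := by
        rw [hR, Finset.card_image_of_injective _ einj, Finset.card_univ, cardS]
      set A : Finset (Fin T) := Finset.univ.filter fun t => w t ∈ B with hA
      have hsplit : M ≤ (A.filter (· ∈ R)).card + (A.filter (· ∉ R)).card :=
        le_of_eq (Finset.card_filter_add_card_filter_not (p := (· ∈ R))).symm
      have h1 : (A.filter (· ∈ R)).card = N := by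
        have : A.filter (· ∈ R) =
            (Finset.univ.filter fun p : Σ i : Fin k, Fin (ℓ i) => w (e p) ∈ B).image e := by
          ext t
          simp only [hA, hR, Finset.mem_filter, Finset.mem_univ, true_and, Finset.mem_image]
          constructor
          · rintro ⟨htB, p, rfl⟩
            exact ⟨p, htB, rfl⟩
          · rintro ⟨p, hpB, rfl⟩
            exact ⟨hpB, p, rfl⟩
        rw [this, Finset.card_image_of_injective _ einj]
      have h2 : (A.filter (· ∉ R)).card ≤ T - V := by
        have hsub : A.filter (· ∉ R) ⊆ Rᶜ := by
          intro t ht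
          simp only [hA, Finset.mem_filter] at ht
          simpa [Finset.mem_compl] using ht.2
        calc (A.filter (· ∉ R)).card ≤ Rᶜ.card := Finset.card_le_card hsub
          _ = T - V := by rw [Finset.card_compl, hcardR]; simp
      have : M ≤ N + (T - V) := by
        calc M ≤ (A.filter (· ∈ R)).card + (A.filter (· ∉ R)).card := hsplit
          _ ≤ N + (T - V) := by rw [h1]; exact Nat.add_le_add_left h2 N
      omega
    obtain ⟨I1, I2⟩ := real_key M N V T hV hVT hNM hMT hMN
    have hεpos : (0 : ℝ) < ε.toReal :=
      ENNReal.toReal_pos (lt_of_le_of_lt zero_le hδε).ne' hεtop.ne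
    have hsub : B ⊆ Metric.thickening ε.toReal B := Metric.self_subset_thickening hεpos B
    have hδle : ENNReal.ofReal (2 * hfun ((V : ℝ) / T)) ≤ ε := hδε.le
    constructor
    · calc μ B = ENNReal.ofReal ((M : ℝ) / T) := hμB
        _ ≤ ENNReal.ofReal ((N : ℝ) / V + 2 * hfun ((V : ℝ) / T)) := ENNReal.ofReal_le_ofReal I1
        _ = ENNReal.ofReal ((N : ℝ) / V) + ENNReal.ofReal (2 * hfun ((V : ℝ) / T)) :=
            ENNReal.ofReal_add (by positivity) hfun_nonneg
        _ = ν B + ENNReal.ofReal (2 * hfun ((V : ℝ) / T)) := by rw [hνB]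
        _ ≤ ν (Metric.thickening ε.toReal B) + ε :=
            add_le_add (measure_mono hsub) hδle
    · calc ν B = ENNReal.ofReal ((N : ℝ) / V) := hνB
        _ ≤ ENNReal.ofReal ((M : ℝ) / T + 2 * hfun ((V : ℝ) / T)) := ENNReal.ofReal_le_ofReal I2
        _ = ENNReal.ofReal ((M : ℝ) / T) + ENNReal.ofReal (2 * hfun ((V : ℝ) / T)) :=
            ENNReal.ofReal_add (by positivity) hfun_nonneg
        _ = μ B + ENNReal.ofReal (2 * hfun ((V : ℝ) / T)) := by rw [hμB]
        _ ≤ μ (Metric.thickening ε.toReal B) + ε :=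
            add_le_add (measure_mono hsub) hδle
  exact ENNReal.toReal_le_of_le_ofReal hfun_nonneg hedist
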